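/- Let 0 → L → M → N → 0 be a short exact sequence of Z_p-modules. Assume: (i) L_Div is cofinitely generated and Cotor(L) has finite exponent; (ii) M is divisible; (iii) N is cofinitely generated and divisible. Then L and M are cofinitely generated Z_p-modules. -/

import Mathlib

abbrev QpModZp (p : ℕ) [Fact p.Prime] :=
  ℚ_[p] ⧸ LinearMap.range (Algebra.linearMap ℤ_[p] ℚ_[p])

def CofinGen (p : ℕ) [Fact p.Prime] (A : Type*) [AddCommGroup A] [Module ℤ_[p] A] : Prop :=
  Module.Finite ℤ_[p] (A →ₗ[ℤ_[p]] QpModZp p)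

def IsDivisibleSubmodule (p : ℕ) [Fact p.Prime] {A : Type*} [AddCommGroup A] [Module ℤ_[p] A]
    (D : Submodule ℤ_[p] A) : Prop :=
  ∀ x ∈ D, ∃ y ∈ D, (p : ℤ_[p]) • y = x

noncomputable def divPart (p : ℕ) [Fact p.Prime] (A : Type*) [AddCommGroup A] [Module ℤ_[p] A] :
    Submodule ℤ_[p] A :=
  sSup {D | IsDivisibleSubmodule p D}

abbrev Cotor (p : ℕ) [Fact p.Prime] (A : Type*) [AddCommGroup A] [Module ℤ_[p] A] :=
  A ⧸ divPart p A



open Submodule LinearMap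

variable {p : ℕ} [Fact p.Prime]

lemma qpmodzp_div (a : ℤ_[p]) (ha : a ≠ 0) (x : QpModZp p) : ∃ y, a • y = x := by
  obtain ⟨q, rfl⟩ := Submodule.Quotient.mk_surjective _ x
  have ha' : (a : ℚ_[p]) ≠ 0 := fun h => ha (Subtype.coe_injective h)
  refine ⟨Submodule.Quotient.mk ((a : ℚ_[p])⁻¹ * q), ?_⟩
  rw [← Submodule.Quotient.mk_smul]
  congr 1
  rw [Algebra.smul_def]
  field_simp
  rfl

lemma qpmodzp_baer : Module.Baer ℤ_[p] (QpModZp p) := by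
  intro I φ
  obtain ⟨a, rfl⟩ : ∃ a, I = Ideal.span {a} := (I.isPrincipal_iff).mp inferInstance
  by_cases ha : a = 0
  · subst ha
    refine ⟨0, fun x hx => ?_⟩
    obtain ⟨c, rfl⟩ := Submodule.mem_span_singleton.mp hx
    have : (⟨c • (0:ℤ_[p]), hx⟩ : Ideal.span ({(0:ℤ_[p])}:Set ℤ_[p])) = 0 := Subtype.ext (by simp)
    rw [this]
    simp
  · have haI : a ∈ Ideal.span {a} := Submodule.mem_span_singleton_self a
    obtain ⟨t, ht⟩ := qpmodzp_div a ha (φ ⟨a, haI⟩)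
    refine ⟨LinearMap.toSpanSingleton ℤ_[p] _ t, fun x hx => ?_⟩
    obtain ⟨c, rfl⟩ := Submodule.mem_span_singleton.mp hx
    have : (⟨c • a, hx⟩ : Ideal.span ({a}:Set ℤ_[p])) = c • ⟨a, haI⟩ := rfl
    rw [this, LinearMap.map_smul φ, ← ht]
    simp [LinearMap.toSpanSingleton_apply, smul_smul]

lemma div_all {A : Type*} [AddCommGroup A] [Module ℤ_[p] A]
    (hdiv : ∀ x : A, ∃ y : A, (p : ℤ_[p]) • y = x) (a : ℤ_[p]) (ha : a ≠ 0) (x : A) :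
    ∃ y : A, a • y = x := by
  have hpow : ∀ (k : ℕ) (x : A), ∃ y : A, ((p : ℤ_[p]) ^ k) • y = x := by
    intro k
    induction k with
    | zero => intro x; exact ⟨x, by simp⟩
    | succ k ih =>
      intro x
      obtain ⟨y, hy⟩ := hdiv x
      obtain ⟨z, hz⟩ := ih y
      refine ⟨z, ?_⟩
      calc ((p:ℤ_[p]) ^ (k+1)) • z = (p:ℤ_[p]) • ((p:ℤ_[p])^k • z) := by
            rw [← mul_smul, ← pow_succ']
        _ = x := by rw [hz, hy]
  obtain ⟨y, hy⟩ := hpow (a.valuation) x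
  refine ⟨(((PadicInt.unitCoeff ha)⁻¹ : ℤ_[p]ˣ) : ℤ_[p]) • y, ?_⟩
  rw [smul_smul]
  nth_rewrite 1 [PadicInt.unitCoeff_spec ha]
  rw [mul_assoc, mul_comm ((p:ℤ_[p]) ^ _), ← mul_assoc, Units.mul_inv, one_mul, hy]

-- divPart is divisible
lemma divPart_div (A : Type*) [AddCommGroup A] [Module ℤ_[p] A] :
    IsDivisibleSubmodule p (divPart p A) := by
  intro x hx
  rw [divPart, sSup_eq_iSup'] at hx
  refine Submodule.iSup_induction (motive := fun x => ∃ y ∈ divPart p A, (p:ℤ_[p]) • y = x)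
    _ hx ?_ ?_ ?_
  · rintro ⟨D, hD⟩ xx hxx
    obtain ⟨y, hy, e⟩ := hD xx hxx
    exact ⟨y, le_sSup hD hy, e⟩
  · exact ⟨0, Submodule.zero_mem _, by simp⟩
  · rintro x₁ x₂ ⟨y₁, hy₁, e₁⟩ ⟨y₂, hy₂, e₂⟩
    exact ⟨y₁ + y₂, Submodule.add_mem _ hy₁ hy₂, by rw [smul_add, e₁, e₂]⟩

lemma divPart_div_all {A : Type*} [AddCommGroup A] [Module ℤ_[p] A]
    (a : ℤ_[p]) (ha : a ≠ 0) (x : A) (hx : x ∈ divPart p A) :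
    ∃ y ∈ divPart p A, a • y = x := by
  have : ∀ z : ↥(divPart p A), ∃ w : ↥(divPart p A), (p:ℤ_[p]) • w = z := by
    rintro ⟨z, hz⟩
    obtain ⟨w, hw, e⟩ := divPart_div A z hz
    exact ⟨⟨w, hw⟩, Subtype.ext e⟩
  obtain ⟨⟨y, hy⟩, e⟩ := div_all this a ha ⟨x, hx⟩
  exact ⟨y, hy, congrArg Subtype.val e⟩

lemma factor_through {M N : Type*} [AddCommGroup M] [Module ℤ_[p] M]
    [AddCommGroup N] [Module ℤ_[p] N]
    (g : M →ₗ[ℤ_[p]] N) (hg : Function.Surjective g) (ψ : M →ₗ[ℤ_[p]] QpModZp p)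
    (h : ∀ m ∈ LinearMap.ker g, ψ m = 0) :
    ∃ χ : N →ₗ[ℤ_[p]] QpModZp p, χ ∘ₗ g = ψ := by
  let e := g.quotKerEquivOfSurjective hg
  refine ⟨(Submodule.liftQ (LinearMap.ker g) ψ h) ∘ₗ e.symm.toLinearMap, ?_⟩
  ext m
  have he : e (Submodule.Quotient.mk m) = g m := by
    simp [e, LinearMap.quotKerEquivOfSurjective, LinearMap.quotKerEquivRange]
  have : e.symm (g m) = Submodule.Quotient.mk m := by
    rw [← he, LinearEquiv.symm_apply_apply]
  simp [this]
  rfl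


set_option maxHeartbeats 2000000 in
/-- Lemma 1.3 (2): let `0 → L → M → N → 0` be a short exact sequence of `ℤ_p`-modules such
that `L_Div` is cofinitely generated, `Cotor(L)` has finite exponent, `M` is divisible and
`N` is cofinitely generated and divisible.  Then `L` and `M` are cofinitely generated. -/
theorem stmt2 {p : ℕ} [Fact p.Prime]
    {L M N : Type*} [AddCommGroup L] [Module ℤ_[p] L] [AddCommGroup M] [Module ℤ_[p] M]
    [AddCommGroup N] [Module ℤ_[p] N]
    (f : L →ₗ[ℤ_[p]] M) (g : M →ₗ[ℤ_[p]] N)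
    (hf : Function.Injective f) (hg : Function.Surjective g)
    (hfg : LinearMap.range f = LinearMap.ker g)
    (hLdiv : CofinGen p (divPart p L))
    (hLcot : ∃ n : ℕ, 0 < n ∧ ∀ x : Cotor p L, n • x = 0)
    (hMdiv : IsDivisibleSubmodule p (⊤ : Submodule ℤ_[p] M))
    (hNcofin : CofinGen p N)
    (hNdiv : IsDivisibleSubmodule p (⊤ : Submodule ℤ_[p] N)) :
    CofinGen p L ∧ CofinGen p M := by
  classical
  obtain ⟨n, hn, hcot⟩ := hLcot
  have baer := qpmodzp_baer (p := p)
  have hnR : ((n : ℤ_[p])) ≠ 0 := Nat.cast_ne_zero.mpr hn.ne'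
  have hMdiv' : ∀ x : M, ∃ y : M, (n : ℤ_[p]) • y = x := by
    intro x
    refine div_all (fun z => ?_) _ hnR x
    obtain ⟨y, -, e⟩ := hMdiv z trivial
    exact ⟨y, e⟩
  have hnL : ∀ x : L, (n : ℤ_[p]) • x ∈ divPart p L := by
    intro x
    have h0 := hcot (Submodule.Quotient.mk x)
    rw [← Nat.cast_smul_eq_nsmul (ℤ_[p]), ← Submodule.Quotient.mk_smul] at h0
    exact (Submodule.Quotient.mk_eq_zero _).mp h0
  have hgf : ∀ l : L, g (f l) = 0 := by
    intro l
    rw [← LinearMap.mem_ker, ← hfg]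
    exact ⟨l, rfl⟩
  haveI hNfin : Module.Finite ℤ_[p] (N →ₗ[ℤ_[p]] QpModZp p) := hNcofin
  haveI hDfin : Module.Finite ℤ_[p] ((divPart p L) →ₗ[ℤ_[p]] QpModZp p) := hLdiv
  -- dual maps
  let fstar : (M →ₗ[ℤ_[p]] QpModZp p) →ₗ[ℤ_[p]] (L →ₗ[ℤ_[p]] QpModZp p) :=
    LinearMap.lcomp ℤ_[p] (QpModZp p) f
  let gstar : (N →ₗ[ℤ_[p]] QpModZp p) →ₗ[ℤ_[p]] (M →ₗ[ℤ_[p]] QpModZp p) :=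
    LinearMap.lcomp ℤ_[p] (QpModZp p) g
  have gstar_inj : Function.Injective gstar := by
    intro χ₁ χ₂ h
    ext t
    obtain ⟨m, rfl⟩ := hg t
    exact LinearMap.congr_fun h m
  have hkerf : LinearMap.ker fstar = LinearMap.range gstar := by
    ext ψ
    constructor
    · intro hψ
      have hv : ∀ m ∈ LinearMap.ker g, ψ m = 0 := by
        intro m hm
        rw [← hfg] at hm
        obtain ⟨l, rfl⟩ := hm
        exact LinearMap.congr_fun (LinearMap.mem_ker.mp hψ) l
      obtain ⟨χ, hχ⟩ := factor_through g hg ψ hv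
      exact ⟨χ, hχ⟩
    · rintro ⟨χ, rfl⟩
      rw [LinearMap.mem_ker]
      ext l
      simp [fstar, gstar, hgf l]
  -- the submodule A of M^∨
  let nM : (M →ₗ[ℤ_[p]] QpModZp p) →ₗ[ℤ_[p]] (M →ₗ[ℤ_[p]] QpModZp p) :=
    (n : ℤ_[p]) • LinearMap.id
  let A : Submodule ℤ_[p] (M →ₗ[ℤ_[p]] QpModZp p) :=
    Submodule.comap nM (LinearMap.range gstar)
  let ndual : Submodule ℤ_[p] (N →ₗ[ℤ_[p]] QpModZp p) :=
    LinearMap.range ((n : ℤ_[p]) • (LinearMap.id : (N →ₗ[ℤ_[p]] QpModZp p) →ₗ[ℤ_[p]] _))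
  haveI hQfin : Module.Finite ℤ_[p] ((N →ₗ[ℤ_[p]] QpModZp p) ⧸ ndual) :=
    Module.Finite.of_surjective ndual.mkQ (Submodule.mkQ_surjective _)
  let s2 : A →ₗ[ℤ_[p]] (LinearMap.range gstar) :=
    LinearMap.codRestrict _ (nM ∘ₗ A.subtype) (fun a => a.2)
  let eg : (N →ₗ[ℤ_[p]] QpModZp p) ≃ₗ[ℤ_[p]] (LinearMap.range gstar) :=
    LinearEquiv.ofInjective gstar gstar_inj
  have heg : ∀ x : LinearMap.range gstar, gstar (eg.symm x) = (x : M →ₗ[ℤ_[p]] QpModZp p) :=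
    fun x => LinearEquiv.ofInjective_symm_apply (f := gstar) (h := gstar_inj) x
  have hs2 : ∀ ψ : A, ((s2 ψ : M →ₗ[ℤ_[p]] QpModZp p)) = (n : ℤ_[p]) • (ψ : M →ₗ[ℤ_[p]] QpModZp p) := by
    intro ψ
    simp only [s2, LinearMap.codRestrict_apply, LinearMap.comp_apply, Submodule.coe_subtype,
      nM, LinearMap.smul_apply, LinearMap.id_apply]
    rfl
  let Theta : A →ₗ[ℤ_[p]] ((N →ₗ[ℤ_[p]] QpModZp p) ⧸ ndual) :=
    ndual.mkQ ∘ₗ (eg.symm.toLinearMap ∘ₗ s2)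
  letI : AddCommGroup A := Submodule.addCommGroup A
  -- finiteness of A ⧸ ker Theta
  haveI hA'fin : Module.Finite ℤ_[p] (A ⧸ LinearMap.ker Theta) := by
    have hinj : Function.Injective ((LinearMap.ker Theta).liftQ Theta le_rfl) := by
      rw [← LinearMap.ker_eq_bot, Submodule.ker_liftQ_eq_bot]
      exact le_rfl
    haveI := isNoetherian_of_injective _ hinj
    exact Module.finite_def.mpr (IsNoetherian.noetherian ⊤)
  -- the lift Φ
  have hcond : LinearMap.ker Theta ≤ LinearMap.ker (fstar ∘ₗ A.subtype) := by
    rintro ψ hψ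
    have h0 : eg.symm (s2 ψ) ∈ ndual := by
      have h0' : Theta ψ = 0 := hψ
      have : ndual.mkQ (eg.symm (s2 ψ)) = 0 := h0'
      exact (Submodule.Quotient.mk_eq_zero ndual).mp this
    obtain ⟨χ₀, hχ₀⟩ := h0
    have hχ₀' : (n : ℤ_[p]) • χ₀ = eg.symm (s2 ψ) := by
      simpa using hχ₀
    have h1 : χ₀.comp g = (ψ : M →ₗ[ℤ_[p]] QpModZp p) ∨ True := Or.inr trivial
    have h2 : (n : ℤ_[p]) • (χ₀.comp g) = (n : ℤ_[p]) • (ψ : M →ₗ[ℤ_[p]] QpModZp p) := by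
      have e1 : gstar ((n : ℤ_[p]) • χ₀) = (n : ℤ_[p]) • (ψ : M →ₗ[ℤ_[p]] QpModZp p) := by
        rw [hχ₀', heg (s2 ψ), hs2 ψ]
      rw [← e1, map_smul]
      rfl
    have hpt : ∀ m : M, (ψ : M →ₗ[ℤ_[p]] QpModZp p) m = χ₀ (g m) := by
      intro m
      obtain ⟨m', hm'⟩ := hMdiv' m
      have h3 := LinearMap.congr_fun h2 m'
      simp only [LinearMap.smul_apply, LinearMap.comp_apply] at h3
      calc (ψ : M →ₗ[ℤ_[p]] QpModZp p) m
          = (ψ : M →ₗ[ℤ_[p]] QpModZp p) ((n : ℤ_[p]) • m') := by rw [hm']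
        _ = (n : ℤ_[p]) • (ψ : M →ₗ[ℤ_[p]] QpModZp p) m' := map_smul _ _ _
        _ = (n : ℤ_[p]) • χ₀ (g m') := by rw [h3]
        _ = χ₀ (g ((n : ℤ_[p]) • m')) := by rw [map_smul g, map_smul χ₀]
        _ = χ₀ (g m) := by rw [hm']
    rw [LinearMap.mem_ker]
    ext l
    simp only [LinearMap.comp_apply, Submodule.coe_subtype, LinearMap.lcomp_apply, fstar]
    rw [hpt (f l), hgf l, map_zero]
    rfl
  let Phi : (A ⧸ LinearMap.ker Theta) →ₗ[ℤ_[p]] (L →ₗ[ℤ_[p]] QpModZp p) :=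
    (LinearMap.ker Theta).liftQ (fstar ∘ₗ A.subtype) hcond
  -- restriction to divPart
  let res : (L →ₗ[ℤ_[p]] QpModZp p) →ₗ[ℤ_[p]] ((divPart p L) →ₗ[ℤ_[p]] QpModZp p) :=
    LinearMap.lcomp ℤ_[p] (QpModZp p) (divPart p L).subtype
  have hrange : LinearMap.range Phi = LinearMap.ker res := by
    rw [Submodule.range_liftQ]
    ext φ
    constructor
    · rintro ⟨⟨ψ, hψA⟩, rfl⟩
      obtain ⟨χ, hχ⟩ := hψA
      have hχ' : χ.comp g = (n : ℤ_[p]) • ψ := by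
        have h' : gstar χ = nM ψ := hχ
        simpa [nM, gstar, LinearMap.lcomp_apply'] using h'
      rw [LinearMap.mem_ker]
      ext d
      obtain ⟨d', hd', ed⟩ := divPart_div_all (p := p) (n : ℤ_[p]) hnR (d : L) d.2
      simp only [LinearMap.comp_apply, Submodule.coe_subtype, LinearMap.lcomp_apply, res, fstar]
      calc ψ (f (d : L)) = ψ (f ((n : ℤ_[p]) • d')) := by rw [ed]
        _ = ((n : ℤ_[p]) • ψ) (f d') := by rw [map_smul f, map_smul ψ]; rfl
        _ = (χ.comp g) (f d') := by rw [hχ']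
        _ = χ (g (f d')) := rfl
        _ = 0 := by rw [hgf d', map_zero]
      
    · intro hφ
      obtain ⟨ψ, hψ⟩ := baer.extension_property f hf φ
      have hφd : ∀ d : L, d ∈ divPart p L → φ d = 0 := by
        intro d hd
        exact LinearMap.congr_fun (LinearMap.mem_ker.mp hφ) ⟨d, hd⟩
      have hvan : ∀ m ∈ LinearMap.ker g, ((n : ℤ_[p]) • ψ) m = 0 := by
        intro m hm
        rw [← hfg] at hm
        obtain ⟨l, rfl⟩ := hm
        have hfl : ψ (f l) = φ l := LinearMap.congr_fun hψ l
        simp only [LinearMap.smul_apply, hfl]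
        rw [← map_smul, hφd _ (hnL l)]
      obtain ⟨χ, hχ⟩ := factor_through g hg ((n : ℤ_[p]) • ψ) hvan
      have hψA : ψ ∈ A := by
        refine ⟨χ, ?_⟩
        show gstar χ = nM ψ
        simp only [nM, LinearMap.smul_apply, LinearMap.id_apply]
        exact hχ
      refine ⟨⟨ψ, hψA⟩, ?_⟩
      exact hψ
  -- conclude for L
  have hLfg : Module.Finite ℤ_[p] (L →ₗ[ℤ_[p]] QpModZp p) := by
    apply Module.finite_def.mpr
    apply Submodule.fg_of_fg_map_of_fg_inf_ker res
    · haveI : IsNoetherian ℤ_[p] ((divPart p L) →ₗ[ℤ_[p]] QpModZp p) := inferInstance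
      exact IsNoetherian.noetherian _
    · have h1 : (Submodule.map Phi ⊤).FG := Submodule.FG.map _ (Module.finite_def.mp hA'fin)
      rw [Submodule.map_top] at h1
      rwa [top_inf_eq, ← hrange]
  haveI := hLfg
  have hMfg : Module.Finite ℤ_[p] (M →ₗ[ℤ_[p]] QpModZp p) := by
    apply Module.finite_def.mpr
    apply Submodule.fg_of_fg_map_of_fg_inf_ker fstar
    · haveI : IsNoetherian ℤ_[p] (L →ₗ[ℤ_[p]] QpModZp p) := inferInstance
      exact IsNoetherian.noetherian _
    · have h1 : (Submodule.map gstar ⊤).FG := Submodule.FG.map _ (Module.finite_def.mp hNfin)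
      rw [Submodule.map_top] at h1
      rwa [top_inf_eq, hkerf]
  exact ⟨hLfg, hMfg⟩
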